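/- (Lemma 1, good committee property.) Let 0 ≤ α < 1/2 and β = 1 − α. For every ε with 0 < ε < 1 there exists m₀ such that for all integers m ≥ m₀ and all integers W ≥ m, if X is a binomial random variable with parameters W and α·m/W and Y is a binomial random variable with parameters W and β·m/W, then P(X ≥ ⌈m/2⌉) + P(Y ≤ ⌊m/2⌋) ≤ ε; i.e., except with probability at most ε, the honest membership shares exceed m/2 and the adversarial membership shares are at most m/2 (the good committee property). -/

import Mathlib

open Finset Real

lemma bern_variance_eval (n : ℕ) (x : ℝ) :
    ∑ ν ∈ Finset.range (n + 1), ((n : ℝ) * x - ν) ^ 2 *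
      ((n.choose ν : ℝ) * x ^ ν * (1 - x) ^ (n - ν)) = (n : ℝ) * x * (1 - x) := by
  have h := congrArg (Polynomial.eval x) (bernsteinPolynomial.variance ℝ n)
  simpa [bernsteinPolynomial, Polynomial.eval_finset_sum, nsmul_eq_mul, mul_comm,
    mul_assoc, mul_left_comm] using h

/-- Chebyshev-type bound for the binomial distribution: the mass of any set of outcomes
at distance at least `c` from the mean `n*x` is at most `n*x*(1-x)/c^2`. -/
lemma cheb_sum (n : ℕ) (x : ℝ) (hx0 : 0 ≤ x) (hx1 : x ≤ 1) (s : Finset ℕ)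
    (hs : s ⊆ Finset.range (n + 1)) (c : ℝ) (hc : 0 < c)
    (hdist : ∀ j ∈ s, c ≤ |(n : ℝ) * x - j|) :
    ∑ j ∈ s, (n.choose j : ℝ) * x ^ j * (1 - x) ^ (n - j) ≤ (n : ℝ) * x * (1 - x) / c ^ 2 := by
  have hp : ∀ j : ℕ, 0 ≤ (n.choose j : ℝ) * x ^ j * (1 - x) ^ (n - j) := fun j => by
    have h1x : (0:ℝ) ≤ 1 - x := by linarith
    positivity
  calc ∑ j ∈ s, (n.choose j : ℝ) * x ^ j * (1 - x) ^ (n - j)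
      ≤ ∑ j ∈ s, (((n : ℝ) * x - j) ^ 2 / c ^ 2) *
          ((n.choose j : ℝ) * x ^ j * (1 - x) ^ (n - j)) := by
        refine Finset.sum_le_sum fun j hj => ?_
        have h1 : (1 : ℝ) ≤ ((n : ℝ) * x - j) ^ 2 / c ^ 2 := by
          rw [le_div_iff₀ (by positivity), one_mul]
          calc c ^ 2 ≤ |(n : ℝ) * x - j| ^ 2 := by
                apply pow_le_pow_left₀ hc.le (hdist j hj)
            _ = ((n : ℝ) * x - j) ^ 2 := sq_abs _
        nlinarith [hp j]
    _ ≤ ∑ j ∈ Finset.range (n + 1), (((n : ℝ) * x - j) ^ 2 / c ^ 2) *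
          ((n.choose j : ℝ) * x ^ j * (1 - x) ^ (n - j)) := by
        refine Finset.sum_le_sum_of_subset_of_nonneg hs fun j _ _ => ?_
        have := hp j; positivity
    _ = (n : ℝ) * x * (1 - x) / c ^ 2 := by
        rw [← bern_variance_eval n x, Finset.sum_div]
        exact Finset.sum_congr rfl fun j _ => by ring

set_option maxHeartbeats 1000000 in
/-- Lemma 1, good committee property: for `0 ≤ α < 1/2`, `β = 1 - α`, and any
`0 < ε < 1`, there is `m₀` such that for all `m ≥ m₀` and `W ≥ m`, with
`X ~ Binomial(W, α·m/W)` and `Y ~ Binomial(W, β·m/W)`,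
`P(X ≥ ⌈m/2⌉) + P(Y ≤ ⌊m/2⌋) ≤ ε`. Both probabilities are written explicitly as sums of the
binomial mass functions. -/
theorem crystal_good_committee (α : ℝ) (hα0 : 0 ≤ α) (hα : α < 1 / 2)
    (β : ℝ) (hβ : β = 1 - α) (ε : ℝ) (hε0 : 0 < ε) (hε1 : ε < 1) :
    ∃ m₀ : ℕ, ∀ m : ℕ, m₀ ≤ m → ∀ W : ℕ, m ≤ W →
      (∑ j ∈ Finset.Icc (⌈(m : ℝ) / 2⌉₊) W,
          (W.choose j : ℝ) * (α * m / W) ^ j * (1 - α * m / W) ^ (W - j))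
      + (∑ j ∈ Finset.Iic (⌊(m : ℝ) / 2⌋₊),
          (W.choose j : ℝ) * (β * m / W) ^ j * (1 - β * m / W) ^ (W - j))
        ≤ ε := by
  set δ : ℝ := 1 / 2 - α with hδdef
  have hδ : 0 < δ := by rw [hδdef]; linarith
  refine ⟨max 1 (⌈1 / (δ ^ 2 * ε)⌉₊ + 1), fun m hm W hW => ?_⟩
  have hm1 : 1 ≤ m := le_trans (le_max_left _ _) hm
  have hmR : (0:ℝ) < m := by exact_mod_cast hm1
  have hmW : (m:ℝ) ≤ W := by exact_mod_cast hW
  have hWR : (0:ℝ) < W := lt_of_lt_of_le hmR hmW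
  have hmbig : 1 / (δ ^ 2 * ε) < m := by
    have h1 : ⌈1 / (δ ^ 2 * ε)⌉₊ + 1 ≤ m := le_trans (le_max_right _ _) hm
    have h2 : ((⌈1 / (δ ^ 2 * ε)⌉₊ : ℝ) + 1) ≤ m := by exact_mod_cast h1
    have h3 := Nat.le_ceil (1 / (δ ^ 2 * ε))
    linarith
  -- upper tail for X
  have hx1 : α * m / W ≤ 1 := by rw [div_le_one hWR]; nlinarith
  have hx0 : 0 ≤ α * m / W := by positivity
  have hWx : (W:ℝ) * (α * m / W) = α * m := by field_simp
  have t1 : (∑ j ∈ Finset.Icc (⌈(m : ℝ) / 2⌉₊) W,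
        (W.choose j : ℝ) * (α * m / W) ^ j * (1 - α * m / W) ^ (W - j))
      ≤ (W:ℝ) * (α * m / W) * (1 - α * m / W) / (δ * m) ^ 2 := by
    refine cheb_sum W (α * m / W) hx0 hx1 _
      (fun j hj => Finset.mem_range.mpr (Nat.lt_succ_of_le (Finset.mem_Icc.mp hj).2))
      (δ * m) (by positivity) (fun j hj => ?_)
    have hj1 := (Finset.mem_Icc.mp hj).1
    have hcl : (m:ℝ) / 2 ≤ (⌈(m : ℝ) / 2⌉₊ : ℝ) := Nat.le_ceil _
    have hjR : (m:ℝ) / 2 ≤ j := le_trans hcl (by exact_mod_cast hj1)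
    rw [hWx]
    calc δ * m ≤ (j:ℝ) - α * m := by rw [hδdef]; nlinarith
      _ ≤ |(j:ℝ) - α * m| := le_abs_self _
      _ = |α * m - j| := abs_sub_comm _ _
  have b1 : (W:ℝ) * (α * m / W) * (1 - α * m / W) / (δ * m) ^ 2 ≤ α / (δ ^ 2 * m) := by
    rw [hWx]
    have h1x : (0:ℝ) ≤ 1 - α * m / W := by linarith
    calc α * (m:ℝ) * (1 - α * m / W) / (δ * m) ^ 2 ≤ α * m * 1 / (δ * m) ^ 2 := by
          gcongr; linarith
      _ = α / (δ ^ 2 * m) := by field_simp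
  -- lower tail for Y
  have hβ0 : 0 ≤ β := by rw [hβ]; linarith
  have hy1 : β * m / W ≤ 1 := by rw [div_le_one hWR]; nlinarith
  have hy0 : 0 ≤ β * m / W := by positivity
  have hWy : (W:ℝ) * (β * m / W) = β * m := by field_simp
  have hbR : ((⌊(m : ℝ) / 2⌋₊ : ℝ)) ≤ (m:ℝ) / 2 := Nat.floor_le (by positivity)
  have t2 : (∑ j ∈ Finset.Iic (⌊(m : ℝ) / 2⌋₊),
        (W.choose j : ℝ) * (β * m / W) ^ j * (1 - β * m / W) ^ (W - j))
      ≤ (W:ℝ) * (β * m / W) * (1 - β * m / W) / (δ * m) ^ 2 := by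
    refine cheb_sum W (β * m / W) hy0 hy1 _ (fun j hj => Finset.mem_range.mpr ?_)
      (δ * m) (by positivity) (fun j hj => ?_)
    · have hjb := Finset.mem_Iic.mp hj
      have : (j:ℝ) ≤ W := le_trans (le_trans (by exact_mod_cast hjb) hbR) (by linarith)
      exact Nat.lt_succ_of_le (by exact_mod_cast this)
    · have hjb := Finset.mem_Iic.mp hj
      have hjR : (j:ℝ) ≤ (m:ℝ) / 2 := le_trans (by exact_mod_cast hjb) hbR
      rw [hWy]
      calc δ * m ≤ β * m - j := by rw [hδdef, hβ]; nlinarith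
        _ ≤ |β * m - j| := le_abs_self _
  have b2 : (W:ℝ) * (β * m / W) * (1 - β * m / W) / (δ * m) ^ 2 ≤ β / (δ ^ 2 * m) := by
    rw [hWy]
    have h1y : (0:ℝ) ≤ 1 - β * m / W := by linarith
    calc β * (m:ℝ) * (1 - β * m / W) / (δ * m) ^ 2 ≤ β * m * 1 / (δ * m) ^ 2 := by
          gcongr; linarith
      _ = β / (δ ^ 2 * m) := by field_simp
  -- combine
  have hsum : α / (δ ^ 2 * m) + β / (δ ^ 2 * m) = 1 / (δ ^ 2 * m) := by
    rw [hβ, ← add_div]; ring_nf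
  have hfin : 1 / (δ ^ 2 * m) ≤ ε := by
    rw [div_le_iff₀ (by positivity)]
    have := (div_lt_iff₀ (by positivity : (0:ℝ) < δ ^ 2 * ε)).mp hmbig
    nlinarith
  linarith [t1, t2, b1, b2]
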